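/- Let ⊗ be the tensor product of a monoidal structure on Graph with unit I_0, and for a, a' ∈ {s, t} let (a,a') : I_0 → I_1 ⊗ I_1 denote the composite of the unit isomorphism I_0 ≅ I_0 ⊗ I_0 with a ⊗ a'. If some vertex of I_1 ⊗ I_1 carries more than one label, i.e., two of the four morphisms (s,s), (s,t), (t,s), (t,t) are equal, then either (s,s) = (t,s) and (s,t) = (t,t), or (s,s) = (s,t) and (t,s) = (t,t), or both. -/

import Mathlib

open CategoryTheory MonoidalCategory

/-- The category of (reflexive) graphs: an object is a set of vertices with an
irreflexive symmetric adjacency relation. -/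
structure GraphCat : Type 1 where
  V : Type
  adj : V → V → Prop
  symm : ∀ {v w : V}, adj v w → adj w v
  loopless : ∀ v : V, ¬ adj v v

namespace GraphCat

/-- A graph map: whenever `v ∼ w`, either `f v = f w` or `f v ∼ f w`. -/
structure Hom (X Y : GraphCat) where
  toFun : X.V → Y.V
  map_adj : ∀ {v w : X.V}, X.adj v w → toFun v = toFun w ∨ Y.adj (toFun v) (toFun w)

theorem Hom.ext' {X Y : GraphCat} {f g : Hom X Y} (h : f.toFun = g.toFun) : f = g := by
  cases f; cases g; cases h; rfl

instance : Category GraphCat where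
  Hom := Hom
  id X := ⟨fun v => v, fun h => Or.inr h⟩
  comp f g := ⟨fun v => g.toFun (f.toFun v), fun {v w} h => by
    rcases f.map_adj h with h' | h'
    · exact Or.inl (congrArg g.toFun h')
    · exact g.map_adj h'⟩
  id_comp f := Hom.ext' rfl
  comp_id f := Hom.ext' rfl
  assoc f g h := Hom.ext' rfl

/-- The one-vertex graph `I₀`. -/
def I0 : GraphCat := ⟨PUnit, fun _ _ => False, fun h => h, fun _ h => h⟩

/-- The graph `I₁` with two vertices `s = false` and `t = true` joined by an edge. -/
def I1 : GraphCat := ⟨Bool, fun v w => v ≠ w, Ne.symm, fun _ h => h rfl⟩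

/-- The vertex inclusions `s, t : I₀ ⟶ I₁` (`s` for `false`, `t` for `true`). -/
def vert (b : Bool) : I0 ⟶ I1 := ⟨fun _ => b, fun {_ _} h => h.elim⟩

section Labels

variable [MonoidalCategory GraphCat]

/-- Given a monoidal structure on graphs with unit `I₀`, the label morphism
`(a, a') : I₀ ⟶ I₁ ⊗ I₁` for `a, a' ∈ {s, t}` (encoded as booleans, `s = false`,
`t = true`): the composite of the unit isomorphism `I₀ ≅ I₀ ⊗ I₀` with `a ⊗ a'`. -/
def lab (hU : (𝟙_ GraphCat) = I0) (a a' : Bool) : I0 ⟶ (I1 ⊗ I1 : GraphCat) :=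
  eqToHom hU.symm ≫ (λ_ (𝟙_ GraphCat)).inv ≫
    ((eqToHom hU ≫ vert a) ⊗ₘ (eqToHom hU ≫ vert a'))

/-- The vertex of `I₁ ⊗ I₁` labelled `(a, a')`, i.e. the image of the morphism
`lab hU a a'`. -/
def vlab (hU : (𝟙_ GraphCat) = I0) (a a' : Bool) : (I1 ⊗ I1 : GraphCat).V :=
  (lab hU a a').toFun PUnit.unit

end Labels

end GraphCat

open GraphCat

/-- The constant endomorphism of `I₁` with value `b`. -/
def constg (b : Bool) : (I1 ⟶ I1 : Type) := ⟨fun _ => b, fun _ => Or.inl rfl⟩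

lemma vert_comp (f : I1 ⟶ I1) (a : Bool) : vert a ≫ f = vert (f.toFun a) :=
  Hom.ext' rfl

lemma lab_comp [MonoidalCategory GraphCat] (hU : (𝟙_ GraphCat) = I0)
    (a a' : Bool) (f g : I1 ⟶ I1) :
    lab hU a a' ≫ (f ⊗ₘ g) = lab hU (f.toFun a) (g.toFun a') := by
  simp only [lab, Category.assoc, tensorHom_comp_tensorHom, vert_comp]

lemma snd_const [MonoidalCategory GraphCat] (hU : (𝟙_ GraphCat) = I0)
    {a c b d : Bool} (h : lab hU a c = lab hU b d) (e : Bool) :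
    lab hU a e = lab hU b e := by
  have := congrArg (· ≫ ((𝟙 I1) ⊗ₘ constg e)) h
  rw [lab_comp, lab_comp] at this
  exact this

lemma fst_const [MonoidalCategory GraphCat] (hU : (𝟙_ GraphCat) = I0)
    {a c b d : Bool} (h : lab hU a c = lab hU b d) (e : Bool) :
    lab hU e c = lab hU e d := by
  have := congrArg (· ≫ (constg e ⊗ₘ (𝟙 I1))) h
  rw [lab_comp, lab_comp] at this
  exact this

/-- Let `⊗` be the tensor product of a monoidal structure on graphs with unit `I₀`.
If some vertex of `I₁ ⊗ I₁` carries more than one label, i.e. two of the four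
morphisms `(s,s), (s,t), (t,s), (t,t) : I₀ ⟶ I₁ ⊗ I₁` are equal, then either
`(s,s) = (t,s)` and `(s,t) = (t,t)`, or `(s,s) = (s,t)` and `(t,s) = (t,t)`,
or both.  (Here `s = false` and `t = true`.) -/
theorem double_label [MonoidalCategory GraphCat] (hU : (𝟙_ GraphCat) = I0)
    (h : ∃ p q : Bool × Bool, p ≠ q ∧ lab hU p.1 p.2 = lab hU q.1 q.2) :
    (lab hU false false = lab hU true false ∧ lab hU false true = lab hU true true) ∨
    (lab hU false false = lab hU false true ∧ lab hU true false = lab hU true true) := by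
  obtain ⟨⟨a, c⟩, ⟨b, d⟩, hne, heq⟩ := h
  by_cases hab : a = b
  · subst hab
    have hcd : c ≠ d := fun h' => hne (by simp [h'])
    right
    have h1 := fst_const hU heq false
    have h2 := fst_const hU heq true
    cases c <;> cases d <;> simp_all [eq_comm]
  · left
    have h1 := snd_const hU heq false
    have h2 := snd_const hU heq true
    cases a <;> cases b <;> simp_all [eq_comm]
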